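/- Let q ≥ 5 be a prime power. For any three mutually distinct 1-dimensional subspaces P₁, P₂, P₃ contained in a common simplex line, the points I(P₁), I(P₂), I(P₃) span a 3-dimensional subspace of F^(q+1) (i.e., they span a projective plane). -/

import Mathlib

open Submodule Module

/-- All columns of the 2×n matrix with rows `x` and `y` are nonzero and pairwise
non-proportional (equivalently, every 2×2 minor is nonzero). -/
def GoodPair {F : Type} [Field F] {n : ℕ} (x y : Fin n → F) : Prop :=
  ∀ i j : Fin n, i ≠ j → x i * y j ≠ x j * y i

/-- A simplex line: a 2-dimensional subspace spanned by the rows of a generator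
matrix all of whose columns are nonzero and pairwise non-proportional. -/
def IsSimplexLine {F : Type} [Field F] {n : ℕ} (C : Submodule F (Fin n → F)) : Prop :=
  ∃ x y : Fin n → F, GoodPair x y ∧ C = span F {x, y}

/-- A simplex point: a 1-dimensional subspace spanned by a vector with exactly
one zero coordinate. -/
def IsSimplexPoint {F : Type} [Field F] {n : ℕ} (P : Submodule F (Fin n → F)) : Prop :=
  ∃ x : Fin n → F, (∃! i, x i = 0) ∧ P = span F {x}

/-- Two simplex points are collinear: they are spanned by the two rows of a
generator matrix of a simplex code, i.e. there is a simplex line containing both. -/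
def PtCollinear {F : Type} [Field F] {n : ℕ} (P Q : Submodule F (Fin n → F)) : Prop :=
  ∃ x y : Fin n → F, GoodPair x y ∧ P = span F {x} ∧ Q = span F {y}

/-- A clique of the graph Γ of simplex lines: all members are simplex lines and
any two distinct members intersect in a 1-dimensional subspace. -/
def IsGammaClique {F : Type} [Field F] {n : ℕ} (T : Set (Submodule F (Fin n → F))) : Prop :=
  (∀ L ∈ T, IsSimplexLine L) ∧
    ∀ L ∈ T, ∀ L' ∈ T, L ≠ L' → finrank F ↥(L ⊓ L') = 1

/-- A top of Γ: a maximal clique of Γ consisting of all simplex lines contained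
in a fixed 3-dimensional subspace (projective plane). -/
def IsGammaTop {F : Type} [Field F] {n : ℕ} (T : Set (Submodule F (Fin n → F))) : Prop :=
  IsGammaClique T ∧ (∀ T' : Set (Submodule F (Fin n → F)), IsGammaClique T' → T ⊆ T' → T' = T) ∧
    ∃ W : Submodule F (Fin n → F), finrank F ↥W = 3 ∧
      T = {L | IsSimplexLine L ∧ L ≤ W}

/-- A monomial linear automorphism: `x ↦ (a₁ x_{σ(1)}, …, aₙ x_{σ(n)})` with all
`aᵢ` nonzero and `σ` a permutation. -/
def IsMonomial {F : Type} [Field F] {n : ℕ} (l : (Fin n → F) ≃ₗ[F] (Fin n → F)) : Prop :=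
  ∃ (a : Fin n → F) (σ : Equiv.Perm (Fin n)),
    (∀ i, a i ≠ 0) ∧ ∀ (x : Fin n → F) (i : Fin n), l x i = a i * x (σ i)

/-- Coordinatewise inversion `I` (with `0⁻¹ = 0`). -/
def vecInv {F : Type} [Field F] {n : ℕ} (x : Fin n → F) : Fin n → F := fun i => (x i)⁻¹


lemma quad2' {F : Type} [Field F] (B C u v : F) (huv : u ≠ v)
    (hu : B*u+C = 0) (hv : B*v+C = 0) : B = 0 ∧ C = 0 := by
  have h : B * (u - v) = 0 := by linear_combination hu - hv
  have hB : B = 0 := by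
    rcases mul_eq_zero.mp h with h | h
    · exact h
    · exact absurd (sub_eq_zero.mp h) huv
  exact ⟨hB, by linear_combination hu - u * hB⟩

lemma quad3 {F : Type} [Field F] (A B C u v w : F) (huv : u ≠ v) (huw : u ≠ w) (hvw : v ≠ w)
    (hu : A*u^2+B*u+C = 0) (hv : A*v^2+B*v+C = 0) (hw : A*w^2+B*w+C = 0) :
    A = 0 ∧ B = 0 ∧ C = 0 := by
  have h : A * ((u-v)*((u-w)*(v-w))) = 0 := by
    linear_combination (v-w)*hu - (u-w)*hv + (u-v)*hw
  have hA : A = 0 := by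
    rcases mul_eq_zero.mp h with h | h
    · exact h
    · rcases mul_eq_zero.mp h with h | h
      · exact absurd (sub_eq_zero.mp h) huv
      · rcases mul_eq_zero.mp h with h | h
        · exact absurd (sub_eq_zero.mp h) huw
        · exact absurd (sub_eq_zero.mp h) hvw
  obtain ⟨hB, hC⟩ := quad2' B C u v huv (by linear_combination hu - u^2*hA)
    (by linear_combination hv - v^2*hA)
  exact ⟨hA, hB, hC⟩

lemma exists_avoid2 {F : Type} [Field F] [Fintype F] [DecidableEq F] (hq : 5 ≤ Fintype.card F)
    (s : Finset F) (hs : s.card ≤ 3) : ∃ u v : F, u ≠ v ∧ u ∉ s ∧ v ∉ s := by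
  have h1 : 1 < sᶜ.card := by rw [Finset.card_compl]; omega
  obtain ⟨u, hu, v, hv, huv⟩ := Finset.one_lt_card.mp h1
  exact ⟨u, v, huv, Finset.mem_compl.mp hu, Finset.mem_compl.mp hv⟩

lemma exists_avoid3 {F : Type} [Field F] [Fintype F] [DecidableEq F] (hq : 5 ≤ Fintype.card F)
    (s : Finset F) (hs : s.card ≤ 2) :
    ∃ u v w : F, u ≠ v ∧ u ≠ w ∧ v ≠ w ∧ u ∉ s ∧ v ∉ s ∧ w ∉ s := by
  have h1 : 2 < sᶜ.card := by rw [Finset.card_compl]; omega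
  obtain ⟨u, hu, v, hv, w, hw, huv, huw, hvw⟩ := Finset.two_lt_card.mp h1
  exact ⟨u, v, w, huv, huw, hvw, Finset.mem_compl.mp hu, Finset.mem_compl.mp hv,
    Finset.mem_compl.mp hw⟩

lemma vanish_aux {F : Type} [Field F] (a₁ b₁ a₂ b₂ a₃ b₃ c₁ c₂ c₃ t : F)
    (h : c₁*(a₁*t+b₁)⁻¹ + c₂*(a₂*t+b₂)⁻¹ + c₃*(a₃*t+b₃)⁻¹ = 0)
    (h1 : a₁*t+b₁ ≠ 0) (h2 : a₂*t+b₂ ≠ 0) (h3 : a₃*t+b₃ ≠ 0) :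
    (c₁*a₂*a₃ + c₂*a₁*a₃ + c₃*a₁*a₂)*t^2
      + (c₁*(a₂*b₃+a₃*b₂) + c₂*(a₁*b₃+a₃*b₁) + c₃*(a₁*b₂+a₂*b₁))*t
      + (c₁*b₂*b₃ + c₂*b₁*b₃ + c₃*b₁*b₂) = 0 := by
  have e1 : (a₁*t+b₁) * (a₁*t+b₁)⁻¹ = 1 := mul_inv_cancel₀ h1
  have e2 : (a₂*t+b₂) * (a₂*t+b₂)⁻¹ = 1 := mul_inv_cancel₀ h2
  have e3 : (a₃*t+b₃) * (a₃*t+b₃)⁻¹ = 1 := mul_inv_cancel₀ h3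
  linear_combination (a₁*t+b₁)*(a₂*t+b₂)*(a₃*t+b₃)*h - c₁*(a₂*t+b₂)*(a₃*t+b₃)*e1
    - c₂*(a₁*t+b₁)*(a₃*t+b₃)*e2 - c₃*(a₁*t+b₁)*(a₂*t+b₂)*e3

/-- nonroot: if `t ≠ -b/a` (and also when `a = 0`, `b ≠ 0`), then `a*t+b ≠ 0`. -/
lemma nonroot {F : Type} [Field F] {a b t : F} (ha : a ≠ 0) (ht : t ≠ -b/a) : a*t+b ≠ 0 := by
  intro h0
  exact ht (by field_simp; linear_combination h0)

lemma key1 {F : Type} [Field F] [Fintype F] (hq : 5 ≤ Fintype.card F)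
    (a₁ b₁ a₂ b₂ a₃ b₃ c₁ c₂ c₃ : F)
    (h12 : a₁*b₂ ≠ a₂*b₁) (h13 : a₁*b₃ ≠ a₃*b₁) (h23 : a₂*b₃ ≠ a₃*b₂)
    (hall : ∀ t : F, c₁*(a₁*t+b₁)⁻¹ + c₂*(a₂*t+b₂)⁻¹ + c₃*(a₃*t+b₃)⁻¹ = 0)
    (hinf : c₁*a₁⁻¹ + c₂*a₂⁻¹ + c₃*a₃⁻¹ = 0) :
    c₁ = 0 := by
  classical
  set A := c₁*a₂*a₃ + c₂*a₁*a₃ + c₃*a₁*a₂ with hAdef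
  set B := c₁*(a₂*b₃+a₃*b₂) + c₂*(a₁*b₃+a₃*b₁) + c₃*(a₁*b₂+a₂*b₁) with hBdef
  set C := c₁*b₂*b₃ + c₂*b₁*b₃ + c₃*b₁*b₂ with hCdef
  have vanish : ∀ t : F, a₁*t+b₁ ≠ 0 → a₂*t+b₂ ≠ 0 → a₃*t+b₃ ≠ 0 → A*t^2+B*t+C = 0 :=
    fun t h1 h2 h3 => vanish_aux a₁ b₁ a₂ b₂ a₃ b₃ c₁ c₂ c₃ t (hall t) h1 h2 h3
  by_cases ha1 : a₁ = 0
  · -- then b₁ ≠ 0, a₂ ≠ 0, a₃ ≠ 0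
    have hb1 : b₁ ≠ 0 := fun h => h12 (by rw [ha1, h]; ring)
    have ha2 : a₂ ≠ 0 := fun h => h12 (by rw [ha1, h]; ring)
    have ha3 : a₃ ≠ 0 := fun h => h13 (by rw [ha1, h]; ring)
    obtain ⟨u, v, w, huv, huw, hvw, hu, hv, hw⟩ := exists_avoid3 hq {-b₂/a₂, -b₃/a₃}
      (le_trans (Finset.card_insert_le _ _) (by simp))
    simp only [Finset.mem_insert, Finset.mem_singleton, not_or] at hu hv hw
    have L1 : ∀ t : F, a₁*t+b₁ ≠ 0 := fun t => by rw [ha1]; simpa using hb1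
    have hq3 := quad3 A B C u v w huv huw hvw
      (vanish u (L1 u) (nonroot ha2 hu.1) (nonroot ha3 hu.2))
      (vanish v (L1 v) (nonroot ha2 hv.1) (nonroot ha3 hv.2))
      (vanish w (L1 w) (nonroot ha2 hw.1) (nonroot ha3 hw.2))
    have hc : c₁ * (a₂*a₃) = 0 := by linear_combination hq3.1 - (a₃*c₂ + a₂*c₃)*ha1
    rcases mul_eq_zero.mp hc with h | h
    · exact h
    · exact absurd h (mul_ne_zero ha2 ha3)
  · -- a₁ ≠ 0
    have hM2 : a₁*b₂ - a₂*b₁ ≠ 0 := sub_ne_zero.mpr h12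
    have hM3 : a₁*b₃ - a₃*b₁ ≠ 0 := sub_ne_zero.mpr h13
    have conclude : A = 0 → B = 0 → C = 0 → c₁ = 0 := by
      intro hA hB hC
      have hc : c₁ * ((a₁*b₂-a₂*b₁)*(a₁*b₃-a₃*b₁)) = 0 := by
        linear_combination b₁^2*hA - a₁*b₁*hB + a₁^2*hC
      rcases mul_eq_zero.mp hc with h | h
      · exact h
      · exact absurd h (mul_ne_zero hM2 hM3)
    by_cases ha2 : a₂ = 0
    · have hb2 : b₂ ≠ 0 := fun h => h12 (by rw [ha2, h]; ring)
      have ha3 : a₃ ≠ 0 := fun h => h23 (by rw [ha2, h]; ring)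
      obtain ⟨u, v, w, huv, huw, hvw, hu, hv, hw⟩ := exists_avoid3 hq {-b₁/a₁, -b₃/a₃}
        (le_trans (Finset.card_insert_le _ _) (by simp))
      simp only [Finset.mem_insert, Finset.mem_singleton, not_or] at hu hv hw
      have L2 : ∀ t : F, a₂*t+b₂ ≠ 0 := fun t => by rw [ha2]; simpa using hb2
      have hq3 := quad3 A B C u v w huv huw hvw
        (vanish u (nonroot ha1 hu.1) (L2 u) (nonroot ha3 hu.2))
        (vanish v (nonroot ha1 hv.1) (L2 v) (nonroot ha3 hv.2))
        (vanish w (nonroot ha1 hw.1) (L2 w) (nonroot ha3 hw.2))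
      exact conclude hq3.1 hq3.2.1 hq3.2.2
    · by_cases ha3 : a₃ = 0
      · have hb3 : b₃ ≠ 0 := fun h => h13 (by rw [ha3, h]; ring)
        obtain ⟨u, v, w, huv, huw, hvw, hu, hv, hw⟩ := exists_avoid3 hq {-b₁/a₁, -b₂/a₂}
          (le_trans (Finset.card_insert_le _ _) (by simp))
        simp only [Finset.mem_insert, Finset.mem_singleton, not_or] at hu hv hw
        have L3 : ∀ t : F, a₃*t+b₃ ≠ 0 := fun t => by rw [ha3]; simpa using hb3
        have hq3 := quad3 A B C u v w huv huw hvw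
          (vanish u (nonroot ha1 hu.1) (nonroot ha2 hu.2) (L3 u))
          (vanish v (nonroot ha1 hv.1) (nonroot ha2 hv.2) (L3 v))
          (vanish w (nonroot ha1 hw.1) (nonroot ha2 hw.2) (L3 w))
        exact conclude hq3.1 hq3.2.1 hq3.2.2
      · -- all aᵢ ≠ 0
        have hA : A = 0 := by
          field_simp at hinf
          linear_combination hinf
        obtain ⟨u, v, huv, hu, hv⟩ := exists_avoid2 hq {-b₁/a₁, -b₂/a₂, -b₃/a₃}
          (le_trans (Finset.card_insert_le _ _)
            (by have h := Finset.card_insert_le (-b₂/a₂) ({-b₃/a₃} : Finset F); rw [Finset.card_singleton] at h; omega))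
        simp only [Finset.mem_insert, Finset.mem_singleton, not_or] at hu hv
        have pu := vanish u (nonroot ha1 hu.1) (nonroot ha2 hu.2.1) (nonroot ha3 hu.2.2)
        have pv := vanish v (nonroot ha1 hv.1) (nonroot ha2 hv.2.1) (nonroot ha3 hv.2.2)
        obtain ⟨hB, hC⟩ := quad2' B C u v huv (by linear_combination pu - u^2*hA)
          (by linear_combination pv - v^2*hA)
        exact conclude hA hB hC

lemma span_eq_of_prop {F : Type} [Field F] {n : ℕ} {x y u v : Fin n → F} {a b a' b' : F}
    (hu : a • x + b • y = u) (hv : a' • x + b' • y = v)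
    (hprop : a * b' = a' * b) (hune : u ≠ 0) (hvne : v ≠ 0) :
    span F {u} = span F {v} := by
  have hui : ∀ i, u i = a * x i + b * y i := fun i => by rw [← hu]; simp
  have hvi : ∀ i, v i = a' * x i + b' * y i := fun i => by rw [← hv]; simp
  have hab : ¬(a = 0 ∧ b = 0) := by
    rintro ⟨h1, h2⟩
    apply hune
    funext i
    rw [hui i, h1, h2]; simp
  have : ∃ l : F, v = l • u := by
    by_cases ha : a = 0
    · have hb : b ≠ 0 := fun h => hab ⟨ha, h⟩
      have ha' : a' = 0 := by
        rcases mul_eq_zero.mp (show a' * b = 0 by rw [← hprop, ha, zero_mul]) with h | h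
        · exact h
        · exact absurd h hb
      refine ⟨b' / b, funext fun i => ?_⟩
      rw [Pi.smul_apply, smul_eq_mul, hui i, hvi i, ha, ha']
      field_simp
      ring
    · refine ⟨a' / a, funext fun i => ?_⟩
      rw [Pi.smul_apply, smul_eq_mul, hui i, hvi i]
      field_simp
      linear_combination y i * hprop
  obtain ⟨l, hl⟩ := this
  have hlne : l ≠ 0 := by
    rintro rfl
    rw [zero_smul] at hl
    exact hvne hl
  rw [hl]
  exact (span_singleton_smul_eq (IsUnit.mk0 l hlne) u).symm

/-- For q ≥ 5 and three mutually distinct points P₁, P₂, P₃ on a simplex line,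
the points I(P₁), I(P₂), I(P₃) span a projective plane (a 3-dimensional subspace). -/
theorem inv_of_three_points_span_plane (F : Type) [Field F] [Fintype F]
    (hq : 5 ≤ Fintype.card F)
    (L : Submodule F (Fin (Fintype.card F + 1) → F)) (hL : IsSimplexLine L)
    (x₁ x₂ x₃ : Fin (Fintype.card F + 1) → F)
    (h₁ : x₁ ∈ L) (h₂ : x₂ ∈ L) (h₃ : x₃ ∈ L)
    (hn₁ : x₁ ≠ 0) (hn₂ : x₂ ≠ 0) (hn₃ : x₃ ≠ 0)
    (h₁₂ : span F {x₁} ≠ span F {x₂})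
    (h₁₃ : span F {x₁} ≠ span F {x₃})
    (h₂₃ : span F {x₂} ≠ span F {x₃}) :
    finrank F ↥(span F {vecInv x₁, vecInv x₂, vecInv x₃}) = 3 := by
  classical
  obtain ⟨x, y, hgood, rfl⟩ := hL
  rw [mem_span_pair] at h₁ h₂ h₃
  obtain ⟨a₁, b₁, e₁⟩ := h₁
  obtain ⟨a₂, b₂, e₂⟩ := h₂
  obtain ⟨a₃, b₃, e₃⟩ := h₃
  have h12 : a₁ * b₂ ≠ a₂ * b₁ := fun h => h₁₂ (span_eq_of_prop e₁ e₂ h hn₁ hn₂)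
  have h13 : a₁ * b₃ ≠ a₃ * b₁ := fun h => h₁₃ (span_eq_of_prop e₁ e₃ h hn₁ hn₃)
  have h23 : a₂ * b₃ ≠ a₃ * b₂ := fun h => h₂₃ (span_eq_of_prop e₂ e₃ h hn₂ hn₃)
  have ec₁ : ∀ i, x₁ i = a₁ * x i + b₁ * y i := fun i => by rw [← e₁]; simp
  have ec₂ : ∀ i, x₂ i = a₂ * x i + b₂ * y i := fun i => by rw [← e₂]; simp
  have ec₃ : ∀ i, x₃ i = a₃ * x i + b₃ * y i := fun i => by rw [← e₃]; simp
  haveI : Nontrivial (Fin (Fintype.card F + 1)) := Fin.nontrivial_iff_two_le.mpr (by omega)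
  have colnz : ∀ i, y i = 0 → x i ≠ 0 := by
    intro i hy hx
    obtain ⟨j, hj⟩ := exists_ne i
    exact hgood i j (Ne.symm hj) (by rw [hx, hy]; ring)
  set f : Fin (Fintype.card F + 1) → Option F :=
    fun i => if y i = 0 then none else some (x i / y i) with hf
  have finj : Function.Injective f := by
    intro i j hij
    by_contra hne
    by_cases hyi : y i = 0
    · by_cases hyj : y j = 0
      · exact hgood i j hne (by rw [hyi, hyj]; ring)
      · simp [hf, hyi, hyj] at hij
    · by_cases hyj : y j = 0
      · simp [hf, hyi, hyj] at hij
      · simp only [hf, if_neg hyi, if_neg hyj, Option.some.injEq] at hij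
        apply hgood i j hne
        field_simp at hij
        linear_combination hij
  have fbij : Function.Bijective f :=
    (Fintype.bijective_iff_injective_and_card f).mpr ⟨finj, by simp⟩
  have hli : LinearIndependent F ![vecInv x₁, vecInv x₂, vecInv x₃] := by
    rw [Fintype.linearIndependent_iff]
    intro g hg
    have hco : ∀ i, g 0 * (x₁ i)⁻¹ + g 1 * (x₂ i)⁻¹ + g 2 * (x₃ i)⁻¹ = 0 := by
      intro i
      have := congr_fun hg i
      simpa [Fin.sum_univ_three, vecInv] using this
    have hall : ∀ t : F, g 0 * (a₁*t+b₁)⁻¹ + g 1 * (a₂*t+b₂)⁻¹ + g 2 * (a₃*t+b₃)⁻¹ = 0 := by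
      intro t
      obtain ⟨i, hi⟩ := fbij.2 (some t)
      have hyi : y i ≠ 0 := by
        intro h; simp [hf, h] at hi
      have hxi : x i = t * y i := by
        simp only [hf, if_neg hyi, Option.some.injEq] at hi
        field_simp at hi
        linear_combination hi
      have hx1 : x₁ i = (a₁*t+b₁) * y i := by rw [ec₁, hxi]; ring
      have hx2 : x₂ i = (a₂*t+b₂) * y i := by rw [ec₂, hxi]; ring
      have hx3 : x₃ i = (a₃*t+b₃) * y i := by rw [ec₃, hxi]; ring
      have h := hco i
      rw [hx1, hx2, hx3] at h
      have e : ∀ c M : F, c * (M * y i)⁻¹ * y i = c * M⁻¹ := fun c M => by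
        rw [mul_inv, ← mul_assoc, mul_assoc, inv_mul_cancel₀ hyi, mul_one]
      have h2 : (g 0 * ((a₁*t+b₁) * y i)⁻¹ + g 1 * ((a₂*t+b₂) * y i)⁻¹
          + g 2 * ((a₃*t+b₃) * y i)⁻¹) * y i = 0 := by rw [h, zero_mul]
      calc g 0 * (a₁*t+b₁)⁻¹ + g 1 * (a₂*t+b₂)⁻¹ + g 2 * (a₃*t+b₃)⁻¹
          = (g 0 * ((a₁*t+b₁) * y i)⁻¹ + g 1 * ((a₂*t+b₂) * y i)⁻¹
            + g 2 * ((a₃*t+b₃) * y i)⁻¹) * y i := by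
            rw [add_mul, add_mul, e, e, e]
        _ = 0 := h2
    have hinf : g 0 * a₁⁻¹ + g 1 * a₂⁻¹ + g 2 * a₃⁻¹ = 0 := by
      obtain ⟨i, hi⟩ := fbij.2 none
      have hyi : y i = 0 := by
        by_contra h; simp [hf, h] at hi
      have hxi : x i ≠ 0 := colnz i hyi
      have hx1 : x₁ i = a₁ * x i := by rw [ec₁, hyi]; ring
      have hx2 : x₂ i = a₂ * x i := by rw [ec₂, hyi]; ring
      have hx3 : x₃ i = a₃ * x i := by rw [ec₃, hyi]; ring
      have h := hco i
      rw [hx1, hx2, hx3] at h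
      have e : ∀ c M : F, c * (M * x i)⁻¹ * x i = c * M⁻¹ := fun c M => by
        rw [mul_inv, ← mul_assoc, mul_assoc, inv_mul_cancel₀ hxi, mul_one]
      have h2 : (g 0 * (a₁ * x i)⁻¹ + g 1 * (a₂ * x i)⁻¹ + g 2 * (a₃ * x i)⁻¹) * x i = 0 := by
        rw [h, zero_mul]
      calc g 0 * a₁⁻¹ + g 1 * a₂⁻¹ + g 2 * a₃⁻¹
          = (g 0 * (a₁ * x i)⁻¹ + g 1 * (a₂ * x i)⁻¹ + g 2 * (a₃ * x i)⁻¹) * x i := by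
            rw [add_mul, add_mul, e, e, e]
        _ = 0 := h2
    have hg0 : g 0 = 0 := key1 hq a₁ b₁ a₂ b₂ a₃ b₃ (g 0) (g 1) (g 2) h12 h13 h23 hall hinf
    have hg1 : g 1 = 0 :=
      key1 hq a₂ b₂ a₁ b₁ a₃ b₃ (g 1) (g 0) (g 2)
        (fun h => h12 h.symm) h23 h13 (fun t => by linear_combination hall t)
        (by linear_combination hinf)
    have hg2 : g 2 = 0 :=
      key1 hq a₃ b₃ a₁ b₁ a₂ b₂ (g 2) (g 0) (g 1)
        (fun h => h13 h.symm) (fun h => h23 h.symm) h12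
        (fun t => by linear_combination hall t) (by linear_combination hinf)
    intro i
    fin_cases i <;> assumption
  have hrange : Set.range ![vecInv x₁, vecInv x₂, vecInv x₃]
      = {vecInv x₁, vecInv x₂, vecInv x₃} := by
    ext v
    constructor
    · rintro ⟨i, rfl⟩
      fin_cases i
      · exact Set.mem_insert _ _
      · exact Set.mem_insert_of_mem _ (Set.mem_insert _ _)
      · exact Set.mem_insert_of_mem _ (Set.mem_insert_of_mem _ rfl)
    · intro h
      simp only [Set.mem_insert_iff, Set.mem_singleton_iff] at h
      rcases h with rfl | rfl | rfl
      exacts [⟨0, rfl⟩, ⟨1, rfl⟩, ⟨2, rfl⟩]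
  have hfr := finrank_span_eq_card hli
  rw [hrange] at hfr
  simpa using hfr
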